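/- Let D be a finite distributive lattice and let Q be a candidate subset of D (i.e., J⁺(D) ⊆ Q ⊆ D). If Q ⊆ D is principal congruence representable, then Q ⊆ D is chain-representable. -/

import Mathlib

/-- A congruence of a lattice: an equivalence relation compatible with join and meet. -/
structure LatCon (L : Type*) [Lattice L] where
  r : L → L → Prop
  refl' : ∀ x, r x x
  symm' : ∀ {x y}, r x y → r y x
  trans' : ∀ {x y z}, r x y → r y z → r x z
  supCompat' : ∀ {a b c d}, r a b → r c d → r (a ⊔ c) (b ⊔ d)
  infCompat' : ∀ {a b c d}, r a b → r c d → r (a ⊓ c) (b ⊓ d)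

namespace LatCon

variable {L : Type*} [Lattice L]

theorem ext' {θ ψ : LatCon L} (h : θ.r = ψ.r) : θ = ψ := by
  cases θ; cases ψ; cases h; rfl

/-- Congruences ordered by inclusion. -/
instance : PartialOrder (LatCon L) where
  le θ ψ := ∀ ⦃x y⦄, θ.r x y → ψ.r x y
  le_refl _ _ _ h := h
  le_trans _ _ _ h h' _ _ hxy := h' (h hxy)
  le_antisymm θ ψ h h' :=
    ext' (by funext x y; exact propext ⟨fun hh => h hh, fun hh => h' hh⟩)

end LatCon

/-- `latConGen x y`: the smallest congruence collapsing `x` and `y`. -/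
def latConGen {L : Type*} [Lattice L] (x y : L) : LatCon L where
  r a b := ∀ θ : LatCon L, θ.r x y → θ.r a b
  refl' a _ _ := LatCon.refl' _ a
  symm' h θ hθ := θ.symm' (h θ hθ)
  trans' h h' θ hθ := θ.trans' (h θ hθ) (h' θ hθ)
  supCompat' h h' θ hθ := θ.supCompat' (h θ hθ) (h' θ hθ)
  infCompat' h h' θ hθ := θ.infCompat' (h θ hθ) (h' θ hθ)

/-- The set of principal congruences of a lattice. -/
def Princ (L : Type*) [Lattice L] : Set (LatCon L) :=
  {θ | ∃ x y : L, x ≤ y ∧ θ = latConGen x y}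

/-- The prime intervals (covering pairs) of an ordered set. -/
def PrimeInt (L : Type*) [Preorder L] : Type _ := {p : L × L // p.1 ⋖ p.2}

/-- The congruence generated by a prime interval. -/
def primeCon {L : Type*} [Lattice L] (p : PrimeInt L) : LatCon L :=
  latConGen p.val.1 p.val.2

/-- The set of nonzero join-irreducible elements of `D`. -/
def JSet (D : Type*) [SemilatticeSup D] : Set D := {d | SupIrred d}

/-- `Q` is a candidate subset of `D`: it contains `0`, `1`, and all join-irreducibles. -/
def IsCandidate (D : Type*) [Lattice D] [BoundedOrder D] (Q : Set D) : Prop :=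
  insert (⊥ : D) (insert (⊤ : D) (JSet D)) ⊆ Q

/-- `L` (a finite lattice) together with an isomorphism `φ : Con L → D` witnesses
principal congruence representability of `Q ⊆ D`. -/
def IsPCRWith (D : Type) [DistribLattice D] (Q : Set D)
    (L : Type) [iLat : Lattice L] [iFin : Fintype L] : Prop :=
  Nonempty L ∧ ∃ φ : LatCon L ≃o D, Q = φ '' Princ L

/-- `Q ⊆ D` is principal congruence representable. -/
def IsPCR (D : Type) [DistribLattice D] (Q : Set D) : Prop :=
  ∃ (L : Type) (iL : Lattice L) (iF : Fintype L),
    IsPCRWith D Q L (iLat := iL) (iFin := iF)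

/-- `D` is fully principal congruence representable. -/
def FullyPCR (D : Type) [DistribLattice D] [BoundedOrder D] : Prop :=
  ∀ Q : Set D, IsCandidate D Q → IsPCR D Q

/-- The element of `D` represented by the interval `[a,b]` of the chain `Fin (n+1)`,
whose `i`-th edge is labeled by `lab i`. -/
def erep {D : Type*} [SemilatticeSup D] [OrderBot D] {n : ℕ}
    (lab : Fin n → D) (a b : Fin (n + 1)) : D :=
  Finset.univ.sup fun i : Fin n =>
    if a ≤ i.castSucc ∧ i.succ ≤ b then lab i else ⊥

/-- The subset of `D` represented by the labeled chain `Fin (n+1)`. -/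
def srep {D : Type*} [SemilatticeSup D] [OrderBot D] {n : ℕ}
    (lab : Fin n → D) : Set D :=
  {x | ∃ a b : Fin (n + 1), a ≤ b ∧ x = erep lab a b}

/-- `lab` makes the chain `Fin (n+1)` a `J(D)`-labeled chain: the labels are
join-irreducible and every join-irreducible element occurs as a label. -/
def IsJLabeling {D : Type*} [SemilatticeSup D] {n : ℕ} (lab : Fin n → D) : Prop :=
  (∀ i, SupIrred (lab i)) ∧ (∀ d : D, SupIrred d → ∃ i, lab i = d)

/-- `Q ⊆ D` is chain-representable. -/
def IsChainRep (D : Type) [DistribLattice D] [BoundedOrder D] (Q : Set D) : Prop :=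
  ∃ (n : ℕ) (lab : Fin n → D), IsJLabeling lab ∧ Q = srep lab

/-- `D` is fully chain-representable. -/
def FullyChainRep (D : Type) [DistribLattice D] [BoundedOrder D] : Prop :=
  ∀ Q : Set D, IsCandidate D Q → IsChainRep D Q

/-- `D` is planar: `J(D)` is the union of two chains. -/
def IsPlanar (D : Type) [DistribLattice D] : Prop :=
  ∃ C₁ C₂ : Set D, IsChain (· ≤ ·) C₁ ∧ IsChain (· ≤ ·) C₂ ∧ JSet D = C₁ ∪ C₂

/-- `D` has at most one join-reducible coatom. -/
def AtMostOneJoinReducibleCoatom (D : Type) [DistribLattice D] [BoundedOrder D] : Prop :=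
  ∀ a b : D, IsCoatom a → IsCoatom b → ¬ SupIrred a → ¬ SupIrred b → a = b

/-- The automorphism group of the lattice `L` is isomorphic to the group `G`. -/
def AutIsoGroup (L : Type) [iLat : Lattice L] (G : Type) [iGrp : Group G] : Prop :=
  Nonempty (G ≃* (L ≃o L))

-- auxiliary section
namespace PCRaux
variable {L : Type*} [Lattice L]

lemma latConGen_self_r (x y : L) (hxy : x ≤ y) : (latConGen x y).r x y := fun _ h => h

lemma latConGen_le_iff {x y : L} {ψ : LatCon L} : latConGen x y ≤ ψ ↔ ψ.r x y :=
  ⟨fun h => h (fun _ h' => h'), fun h _ _ hab => hab ψ h⟩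

lemma r_mono (ψ : LatCon L) {x y x' y' : L} (h : ψ.r x' y')
    (h1 : x' ≤ x) (h2 : x ≤ y) (h3 : y ≤ y') : ψ.r x y := by
  have hx : ψ.r (x' ⊔ x) (y' ⊔ x) := ψ.supCompat' h (ψ.refl' x)
  rw [sup_eq_right.2 h1, sup_eq_left.2 (h2.trans h3)] at hx
  -- hx : ψ.r x y'
  have hy : ψ.r (x ⊓ y) (y' ⊓ y) := ψ.infCompat' hx (ψ.refl' y)
  rwa [inf_eq_left.2 h2, inf_eq_right.2 h3] at hy

lemma latConGen_mono {x y x' y' : L} (h1 : x' ≤ x) (h2 : x ≤ y) (h3 : y ≤ y') :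
    latConGen x y ≤ latConGen x' y' :=
  latConGen_le_iff.2 (r_mono _ (latConGen_self_r x' y' (h1.trans (h2.trans h3))) h1 h2 h3)

/-- the trivial congruence -/
def botCon : LatCon L where
  r a b := a = b
  refl' _ := rfl
  symm' h := h.symm
  trans' h h' := h.trans h'
  supCompat' h h' := by rw [h, h']
  infCompat' h h' := by rw [h, h']

lemma botCon_le (θ : LatCon L) : (botCon : LatCon L) ≤ θ := by
  rintro x y (rfl : x = y); exact θ.refl' x

lemma latConGen_self (u : L) : latConGen u u = (botCon : LatCon L) := by
  apply le_antisymm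
  · exact latConGen_le_iff.2 rfl
  · exact botCon_le _

lemma r_inf_sup {ψ : LatCon L} {x y : L} (h : ψ.r x y) : ψ.r (x ⊓ y) (x ⊔ y) := by
  have h1 : ψ.r (x ⊔ x) (x ⊔ y) := ψ.supCompat' (ψ.refl' x) h
  rw [sup_idem] at h1
  have h2 : ψ.r (x ⊓ y) (y ⊓ y) := ψ.infCompat' h (ψ.refl' y)
  rw [inf_idem] at h2
  exact ψ.trans' h2 (ψ.trans' (ψ.symm' h) h1)

lemma r_of_inf_sup {ψ : LatCon L} {x y : L} (h : ψ.r (x ⊓ y) (x ⊔ y)) : ψ.r x y := by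
  have h1 : ψ.r ((x ⊓ y) ⊔ x) ((x ⊔ y) ⊔ x) := ψ.supCompat' h (ψ.refl' x)
  have e1 : (x ⊓ y) ⊔ x = x := by simp [sup_comm, inf_comm]
  have e2 : (x ⊔ y) ⊔ x = x ⊔ y := by
    rw [sup_comm x y, sup_assoc, sup_idem]
  rw [e1, e2] at h1
  have h2 : ψ.r ((x ⊓ y) ⊔ y) ((x ⊔ y) ⊔ y) := ψ.supCompat' h (ψ.refl' y)
  have e3 : (x ⊓ y) ⊔ y = y := by simp [sup_comm, inf_comm]
  have e4 : (x ⊔ y) ⊔ y = x ⊔ y := by rw [sup_assoc, sup_idem]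
  rw [e3, e4] at h2
  exact ψ.trans' h1 (ψ.symm' h2)

/-- overlap lemma -/
lemma r_overlap {ψ : LatCon L} {A B C D w : L} (hAB : ψ.r A B) (hCD : ψ.r C D)
    (h1 : A ≤ w) (h2 : w ≤ B) (h3 : C ≤ w) (h4 : w ≤ D) : ψ.r (A ⊓ C) (B ⊔ D) := by
  have hinf : ψ.r (A ⊓ C) (B ⊓ D) := ψ.infCompat' hAB hCD
  have hsup : ψ.r (A ⊔ C) (B ⊔ D) := ψ.supCompat' hAB hCD
  have hle : A ⊔ C ≤ B ⊓ D := sup_le (h1.trans (le_inf h2 h4)) (h3.trans (le_inf h2 h4))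
  have h5 : ψ.r ((A ⊔ C) ⊔ (B ⊓ D)) ((B ⊔ D) ⊔ (B ⊓ D)) := ψ.supCompat' hsup (ψ.refl' _)
  rw [sup_eq_right.2 hle, sup_eq_left.2 (le_trans inf_le_left le_sup_left)] at h5
  exact ψ.trans' hinf h5

end PCRaux
namespace PCRaux
variable {L : Type*} [Lattice L]

/-- join of two congruences via reflexive-transitive closure -/
def joinCon (θ ψ : LatCon L) : LatCon L where
  r := Relation.ReflTransGen (fun x y => θ.r x y ∨ ψ.r x y)
  refl' _ := Relation.ReflTransGen.refl
  symm' h := (@Relation.ReflTransGen.stdSymm _ _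
      ⟨fun _ _ h' => h'.imp θ.symm' ψ.symm'⟩).symm _ _ h
  trans' h h' := h.trans h'
  supCompat' {a b c d} h h' := by
    have s1 : Relation.ReflTransGen (fun x y => θ.r x y ∨ ψ.r x y) (a ⊔ c) (b ⊔ c) :=
      Relation.ReflTransGen.lift (fun x => x ⊔ c)
        (fun x y (hxy : θ.r x y ∨ ψ.r x y) => hxy.imp (fun h0 => θ.supCompat' h0 (θ.refl' c))
          (fun h0 => ψ.supCompat' h0 (ψ.refl' c))) _ _ h
    have s2 : Relation.ReflTransGen (fun x y => θ.r x y ∨ ψ.r x y) (b ⊔ c) (b ⊔ d) :=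
      Relation.ReflTransGen.lift (fun x => b ⊔ x)
        (fun x y (hxy : θ.r x y ∨ ψ.r x y) => hxy.imp (fun h0 => θ.supCompat' (θ.refl' b) h0)
          (fun h0 => ψ.supCompat' (ψ.refl' b) h0)) _ _ h'
    exact s1.trans s2
  infCompat' {a b c d} h h' := by
    have s1 : Relation.ReflTransGen (fun x y => θ.r x y ∨ ψ.r x y) (a ⊓ c) (b ⊓ c) :=
      Relation.ReflTransGen.lift (fun x => x ⊓ c)
        (fun x y (hxy : θ.r x y ∨ ψ.r x y) => hxy.imp (fun h0 => θ.infCompat' h0 (θ.refl' c))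
          (fun h0 => ψ.infCompat' h0 (ψ.refl' c))) _ _ h
    have s2 : Relation.ReflTransGen (fun x y => θ.r x y ∨ ψ.r x y) (b ⊓ c) (b ⊓ d) :=
      Relation.ReflTransGen.lift (fun x => b ⊓ x)
        (fun x y (hxy : θ.r x y ∨ ψ.r x y) => hxy.imp (fun h0 => θ.infCompat' (θ.refl' b) h0)
          (fun h0 => ψ.infCompat' (ψ.refl' b) h0)) _ _ h'
    exact s1.trans s2

lemma le_joinCon_left (θ ψ : LatCon L) : θ ≤ joinCon θ ψ :=
  fun _ _ h => Relation.ReflTransGen.single (Or.inl h)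
lemma le_joinCon_right (θ ψ : LatCon L) : ψ ≤ joinCon θ ψ :=
  fun _ _ h => Relation.ReflTransGen.single (Or.inr h)
lemma joinCon_le {θ ψ ξ : LatCon L} (h1 : θ ≤ ξ) (h2 : ψ ≤ ξ) : joinCon θ ψ ≤ ξ := by
  intro x y h
  induction h with
  | refl => exact ξ.refl' x
  | tail _ hstep ih => exact ξ.trans' ih (hstep.elim (fun h' => h1 h') (fun h' => h2 h'))

/-- the key projection argument: if a covering pair is collapsed by the join of
two congruences, it is collapsed by one of them. -/
lemma cov_step {θ ψ : LatCon L} {a b : L} (hab : a ⋖ b)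
    (h : (joinCon θ ψ).r a b) : θ.r a b ∨ ψ.r a b := by
  have key : ∀ z : L, Relation.ReflTransGen (fun x y => θ.r x y ∨ ψ.r x y) a z →
      θ.r a b ∨ ψ.r a b ∨ (z ⊔ a) ⊓ b = a := by
    intro z hz
    induction hz with
    | refl =>
        right; right; rw [sup_idem, inf_eq_left.2 hab.le]
    | @tail c z' _ hstep ih =>
        rcases ih with h1 | h1 | h1
        · exact Or.inl h1
        · exact Or.inr (Or.inl h1)
        · have hz'ab : a ≤ (z' ⊔ a) ⊓ b := le_inf (le_sup_right) hab.le
          have hz'b : (z' ⊔ a) ⊓ b ≤ b := inf_le_right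
          rcases hab.eq_or_eq hz'ab hz'b with he | he
          · exact Or.inr (Or.inr he)
          · rcases hstep with hs | hs
            · left
              have : θ.r ((c ⊔ a) ⊓ b) ((z' ⊔ a) ⊓ b) :=
                θ.infCompat' (θ.supCompat' hs (θ.refl' a)) (θ.refl' b)
              rwa [h1, he] at this
            · right; left
              have : ψ.r ((c ⊔ a) ⊓ b) ((z' ⊔ a) ⊓ b) :=
                ψ.infCompat' (ψ.supCompat' hs (ψ.refl' a)) (ψ.refl' b)
              rwa [h1, he] at this
  rcases key b h with h1 | h1 | h1
  · exact Or.inl h1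
  · exact Or.inr h1
  · exfalso
    rw [sup_eq_left.2 hab.le, inf_idem] at h1
    exact hab.ne h1.symm

end PCRaux
namespace PCRaux
variable {L : Type*} [Lattice L]

section Phi
variable {D : Type*} [DistribLattice D] [BoundedOrder D] (φ : LatCon L ≃o D)

lemma phi_bot : φ (botCon : LatCon L) = ⊥ := by
  have : (botCon : LatCon L) ≤ φ.symm ⊥ := botCon_le _
  have h2 := φ.le_iff_le.2 this
  rwa [φ.apply_symm_apply, le_bot_iff] at h2

/-- the congruence of a prime (covering) interval is join-irreducible -/
lemma prime_supIrred {p q : L} (h : p ⋖ q) : SupIrred (φ (latConGen p q)) := by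
  constructor
  · intro hmin
    have h1 : φ botCon ≤ φ (latConGen p q) := φ.le_iff_le.2 (botCon_le _)
    have h2 : latConGen p q ≤ botCon := φ.le_iff_le.1 (hmin h1)
    exact h.ne (h2 (latConGen_self_r p q h.le))
  · intro d1 d2 hsup
    set θ := φ.symm d1 with hθ
    set ψ := φ.symm d2 with hψ
    have hθle : θ ≤ latConGen p q := by
      rw [← φ.le_iff_le, φ.apply_symm_apply, ← hsup]; exact le_sup_left
    have hψle : ψ ≤ latConGen p q := by
      rw [← φ.le_iff_le, φ.apply_symm_apply, ← hsup]; exact le_sup_right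
    have hjoin : joinCon θ ψ = latConGen p q := by
      apply le_antisymm (joinCon_le hθle hψle)
      rw [← φ.le_iff_le, ← hsup]
      apply sup_le
      · rw [← φ.apply_symm_apply d1, φ.le_iff_le, ← hθ]; exact le_joinCon_left θ ψ
      · rw [← φ.apply_symm_apply d2, φ.le_iff_le, ← hψ]; exact le_joinCon_right θ ψ
    have hrpq : (joinCon θ ψ).r p q := by
      rw [hjoin]; exact latConGen_self_r p q h.le
    rcases cov_step h hrpq with hr | hr
    · left
      have : latConGen p q ≤ θ := latConGen_le_iff.2 hr
      have := le_antisymm hθle this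
      rw [← this, hθ, φ.apply_symm_apply]
    · right
      have : latConGen p q ≤ ψ := latConGen_le_iff.2 hr
      have := le_antisymm hψle this
      rw [← this, hψ, φ.apply_symm_apply]

end Phi

/-! window inf and sup along a walk -/

def wInf (z : ℕ → L) (a : ℕ) : ℕ → L
  | 0 => z a
  | (k+1) => wInf z a k ⊓ z (a + k + 1)

def wSup (z : ℕ → L) (a : ℕ) : ℕ → L
  | 0 => z a
  | (k+1) => wSup z a k ⊔ z (a + k + 1)

lemma wInf_le (z : ℕ → L) (a : ℕ) : ∀ k j, a ≤ j → j ≤ a + k → wInf z a k ≤ z j := by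
  intro k
  induction k with
  | zero => intro j h1 h2; have : j = a := by omega
            subst this; exact le_rfl
  | succ k ih =>
      intro j h1 h2
      rcases Nat.lt_or_ge j (a + k + 1) with h | h
      · exact le_trans inf_le_left (ih j h1 (by omega))
      · have : j = a + k + 1 := by omega
        subst this; exact inf_le_right

lemma le_wSup (z : ℕ → L) (a : ℕ) : ∀ k j, a ≤ j → j ≤ a + k → z j ≤ wSup z a k := by
  intro k
  induction k with
  | zero => intro j h1 h2; have : j = a := by omega
            subst this; exact le_rfl
  | succ k ih =>
      intro j h1 h2
      rcases Nat.lt_or_ge j (a + k + 1) with h | h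
      · exact le_trans (ih j h1 (by omega)) le_sup_left
      · have : j = a + k + 1 := by omega
        subst this; exact le_sup_right

lemma wInf_le_wSup (z : ℕ → L) (a k : ℕ) : wInf z a k ≤ wSup z a k :=
  le_trans (wInf_le z a k a le_rfl (by omega)) (le_wSup z a k a le_rfl (by omega))

/-- fence lemma: a congruence collapsing all steps collapses window inf and sup -/
lemma fence (ψ : LatCon L) (z : ℕ → L) (a : ℕ) :
    ∀ k, (∀ i, a ≤ i → i < a + k → ψ.r (z i) (z (i+1))) →
      ψ.r (wInf z a k) (wSup z a k) := by
  intro k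
  induction k with
  | zero => intro _; exact ψ.refl' _
  | succ k ih =>
      intro hstep
      have h1 : ψ.r (wInf z a k) (wSup z a k) := ih (fun i hi hi' => hstep i hi (by omega))
      have h2 : ψ.r (z (a+k)) (z (a+k+1)) := hstep (a+k) (by omega) (by omega)
      have h2' : ψ.r (z (a+k) ⊓ z (a+k+1)) (z (a+k) ⊔ z (a+k+1)) := r_inf_sup h2
      have := r_overlap h1 h2'
        (wInf_le z a k (a+k) (by omega) (by omega))
        (le_wSup z a k (a+k) (by omega) (by omega))
        inf_le_left le_sup_left
      have e1 : wInf z a k ⊓ (z (a+k) ⊓ z (a+k+1)) = wInf z a (k+1) := by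
        rw [← inf_assoc, inf_eq_left.2 (wInf_le z a k (a+k) (by omega) (by omega))]
        rfl
      have e2 : wSup z a k ⊔ (z (a+k) ⊔ z (a+k+1)) = wSup z a (k+1) := by
        rw [← sup_assoc, sup_eq_left.2 (le_wSup z a k (a+k) (by omega) (by omega))]
        rfl
      rwa [e1, e2] at this

/-- a monotone window has inf and sup its endpoints -/
lemma wInf_wSup_of_monotone (z : ℕ → L) (a : ℕ) :
    ∀ k, (∀ i, a ≤ i → i < a + k → z i ≤ z (i+1)) →
      wInf z a k = z a ∧ wSup z a k = z (a + k) := by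
  intro k
  induction k with
  | zero => intro _; exact ⟨rfl, rfl⟩
  | succ k ih =>
      intro hmono
      obtain ⟨hI, hS⟩ := ih (fun i hi hi' => hmono i hi (by omega))
      have hlast : z (a+k) ≤ z (a+k+1) := hmono (a+k) (by omega) (by omega)
      constructor
      · show wInf z a k ⊓ z (a+k+1) = z a
        rw [hI, inf_eq_left]
        exact le_trans (by rw [← hI]; exact (hI ▸ wInf_le z a k (a+k) (by omega) (by omega))) hlast
      · show wSup z a k ⊔ z (a+k+1) = z (a+k+1)
        rw [hS, sup_eq_right.2 hlast]

end PCRaux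
namespace PCRaux
variable {L : Type*} [Lattice L]

/-- concatenation of two walks -/
def catF (n₁ : ℕ) (z₁ z₂ : ℕ → L) : ℕ → L := fun i => if i ≤ n₁ then z₁ i else z₂ (i - n₁)

lemma catF_le {n₁ : ℕ} {z₁ z₂ : ℕ → L} {i : ℕ} (h : i ≤ n₁) : catF n₁ z₁ z₂ i = z₁ i :=
  if_pos h

lemma catF_ge {n₁ : ℕ} {z₁ z₂ : ℕ → L} (glue : z₁ n₁ = z₂ 0) {i : ℕ} (h : n₁ ≤ i) :
    catF n₁ z₁ z₂ i = z₂ (i - n₁) := by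
  rcases Nat.eq_or_lt_of_le h with rfl | h'
  · rw [catF_le le_rfl, Nat.sub_self, glue]
  · exact if_neg (by omega)

lemma catF_rel {R : L → L → Prop} {n₁ n₂ : ℕ} {z₁ z₂ : ℕ → L} (glue : z₁ n₁ = z₂ 0)
    (h₁ : ∀ i < n₁, R (z₁ i) (z₁ (i+1))) (h₂ : ∀ i < n₂, R (z₂ i) (z₂ (i+1))) :
    ∀ i < n₁ + n₂, R (catF n₁ z₁ z₂ i) (catF n₁ z₁ z₂ (i+1)) := by
  intro i hi
  rcases Nat.lt_or_ge i n₁ with h | h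
  · rw [catF_le (by omega), catF_le (by omega)]
    exact h₁ i h
  · rw [catF_ge glue h, catF_ge glue (by omega)]
    have : i + 1 - n₁ = (i - n₁) + 1 := by omega
    rw [this]
    exact h₂ _ (by omega)

/-- the walk has an ascending segment from `u` to `v` -/
def HasSeg (n : ℕ) (z : ℕ → L) (u v : L) : Prop :=
  ∃ a b, a ≤ b ∧ b ≤ n ∧ z a = u ∧ z b = v ∧ ∀ i, a ≤ i → i < b → z i ≤ z (i+1)

lemma HasSeg.cat_left {n₁ n₂ : ℕ} {z₁ z₂ : ℕ → L} {u v : L} (h : HasSeg n₁ z₁ u v) :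
    HasSeg (n₁ + n₂) (catF n₁ z₁ z₂) u v := by
  obtain ⟨a, b, hab, hbn, hu, hv, hmono⟩ := h
  exact ⟨a, b, hab, by omega, by rw [catF_le (by omega)]; exact hu,
    by rw [catF_le hbn]; exact hv,
    fun i h1 h2 => by
      rw [catF_le (by omega), catF_le (by omega)]; exact hmono i h1 h2⟩

lemma HasSeg.cat_right {n₁ n₂ : ℕ} {z₁ z₂ : ℕ → L} (glue : z₁ n₁ = z₂ 0) {u v : L}
    (h : HasSeg n₂ z₂ u v) : HasSeg (n₁ + n₂) (catF n₁ z₁ z₂) u v := by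
  obtain ⟨a, b, hab, hbn, hu, hv, hmono⟩ := h
  refine ⟨n₁ + a, n₁ + b, by omega, by omega, ?_, ?_, ?_⟩
  · rw [catF_ge glue (by omega)]; simpa using hu
  · rw [catF_ge glue (by omega)]; simpa using hv
  · intro i h1 h2
    rw [catF_ge glue (by omega), catF_ge glue (by omega)]
    have e : i + 1 - n₁ = (i - n₁) + 1 := by omega
    rw [e]
    exact hmono (i - n₁) (by omega) (by omega)

section Walks
variable [Fintype L]

/-- existence of a maximal (covering) chain between `u ≤ v` -/
lemma exists_asc : ∀ (N : ℕ) (u v : L), (Set.Ioc u v).ncard ≤ N → u ≤ v →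
    ∃ (n : ℕ) (z : ℕ → L), z 0 = u ∧ z n = v ∧ ∀ i < n, z i ⋖ z (i+1) := by
  intro N
  induction N with
  | zero =>
      intro u v hcard huv
      rcases eq_or_lt_of_le huv with rfl | hlt
      · exact ⟨0, fun _ => u, rfl, rfl, fun i h => absurd h (by omega)⟩
      · exfalso
        have : v ∈ Set.Ioc u v := ⟨hlt, le_rfl⟩
        have hpos : 0 < (Set.Ioc u v).ncard :=
          (Set.ncard_pos (Set.toFinite _)).2 ⟨v, this⟩
        omega
  | succ N ih =>
      intro u v hcard huv
      rcases eq_or_lt_of_le huv with rfl | hlt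
      · exact ⟨0, fun _ => u, rfl, rfl, fun i h => absurd h (by omega)⟩
      · haveI : WellFoundedLT L := Finite.to_wellFoundedLT
        haveI : IsStronglyAtomic L := IsStronglyAtomic.of_wellFounded_lt wellFounded_lt
        obtain ⟨c, hcov, hcv⟩ := exists_covBy_le_of_lt hlt
        have hsub : Set.Ioc c v ⊂ Set.Ioc u v := by
          constructor
          · rintro x ⟨hx1, hx2⟩; exact ⟨hcov.lt.trans hx1, hx2⟩
          · intro hcon
            have : c ∈ Set.Ioc c v := hcon ⟨hcov.lt, hcv⟩
            exact lt_irrefl c this.1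
        have hlt' : (Set.Ioc c v).ncard < (Set.Ioc u v).ncard :=
          Set.ncard_lt_ncard hsub (Set.toFinite _)
        obtain ⟨n, z, hz0, hzn, hzcov⟩ := ih c v (by omega) hcv
        refine ⟨n + 1, fun i => if i = 0 then u else z (i - 1), if_pos rfl, ?_, ?_⟩
        · simp only [Nat.succ_ne_zero, if_neg, Nat.add_sub_cancel]
          exact hzn
        · intro i hi
          rcases Nat.eq_zero_or_pos i with rfl | hpos
          · simpa [hz0] using hcov
          · have e1 : ¬ (i = 0) := by omega
            have e2 : ¬ (i + 1 = 0) := by omega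
            simp only [if_neg e1, if_neg e2]
            have : i + 1 - 1 = (i - 1) + 1 := by omega
            rw [this]
            exact hzcov _ (by omega)

lemma exists_asc' (u v : L) (huv : u ≤ v) :
    ∃ (n : ℕ) (z : ℕ → L), z 0 = u ∧ z n = v ∧ ∀ i < n, z i ⋖ z (i+1) :=
  exists_asc (Set.Ioc u v).ncard u v le_rfl huv

/-- a mountain: up from `m` to `u` to `v`, back down to `m` -/
lemma exists_mountain (m u v : L) (hmu : m ≤ u) (huv : u ≤ v) :
    ∃ (n : ℕ) (z : ℕ → L), z 0 = m ∧ z n = m ∧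
      (∀ i < n, z i ⋖ z (i+1) ∨ z (i+1) ⋖ z i) ∧ HasSeg n z u v := by
  obtain ⟨na, za, ha0, han, hacov⟩ := exists_asc' m u hmu
  obtain ⟨nb, zb, hb0, hbn, hbcov⟩ := exists_asc' u v huv
  obtain ⟨nc, zc, hc0, hcn, hccov⟩ := exists_asc' m v (hmu.trans huv)
  -- descending walk from v to m
  set zd : ℕ → L := fun i => zc (nc - i) with hzd
  have hd0 : zd 0 = v := by simp [hzd, hcn]
  have hdn : zd nc = m := by simp [hzd, hc0]
  have hdcov : ∀ i < nc, zd (i+1) ⋖ zd i := by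
    intro i hi
    have e : nc - i = (nc - (i+1)) + 1 := by omega
    simp only [hzd]
    rw [e]
    exact hccov _ (by omega)
  -- first concatenation: za then zb
  set z1 := catF na za zb with hz1
  have glue1 : za na = zb 0 := by rw [han, hb0]
  have h10 : z1 0 = m := by rw [hz1, catF_le (Nat.zero_le _), ha0]
  have h1n : z1 (na + nb) = v := by
    rw [hz1, catF_ge glue1 (by omega)]
    simpa using hbn
  -- second concatenation
  set z2 := catF (na + nb) z1 zd with hz2
  have glue2 : z1 (na + nb) = zd 0 := by rw [h1n, hd0]
  refine ⟨na + nb + nc, z2, ?_, ?_, ?_, ?_⟩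
  · rw [hz2, catF_le (Nat.zero_le _)]; exact h10
  · rw [hz2, catF_ge glue2 (by omega)]
    simpa using hdn
  · apply catF_rel (R := fun x y => x ⋖ y ∨ y ⋖ x) glue2
    · apply catF_rel (R := fun x y => x ⋖ y ∨ y ⋖ x) glue1
      · exact fun i hi => Or.inl (hacov i hi)
      · exact fun i hi => Or.inl (hbcov i hi)
    · exact fun i hi => Or.inr (hdcov i hi)
  · have hseg1 : HasSeg (na + nb) z1 u v := by
      apply HasSeg.cat_right glue1
      exact ⟨0, nb, Nat.zero_le _, le_rfl, hb0, hbn,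
        fun i h1 h2 => (hbcov i h2).le⟩
    exact hseg1.cat_left

/-- full walk containing an ascending segment for every pair -/
lemma exists_walk (m : L) (hm : ∀ x : L, m ≤ x) :
    ∃ (n : ℕ) (z : ℕ → L), (∀ i < n, z i ⋖ z (i+1) ∨ z (i+1) ⋖ z i) ∧
      ∀ u v : L, u ≤ v → HasSeg n z u v := by
  suffices h : ∀ l : List (L × L), ∃ (n : ℕ) (z : ℕ → L), z 0 = m ∧ z n = m ∧
      (∀ i < n, z i ⋖ z (i+1) ∨ z (i+1) ⋖ z i) ∧
      ∀ p ∈ l, p.1 ≤ p.2 → HasSeg n z p.1 p.2 by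
    obtain ⟨n, z, _, _, hcov, hseg⟩ := h (Finset.univ : Finset (L × L)).toList
    exact ⟨n, z, hcov, fun u v huv =>
      hseg (u, v) (Finset.mem_toList.2 (Finset.mem_univ _)) huv⟩
  intro l
  induction l with
  | nil =>
      exact ⟨0, fun _ => m, rfl, rfl, fun i h => absurd h (by omega),
        fun p hp => absurd hp List.not_mem_nil⟩
  | cons p l ih =>
      obtain ⟨n₂, z₂, h20, h2n, h2cov, h2seg⟩ := ih
      by_cases hp : p.1 ≤ p.2
      · obtain ⟨n₁, z₁, h10, h1n, h1cov, h1seg⟩ := exists_mountain m p.1 p.2 (hm _) hp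
        have glue : z₁ n₁ = z₂ 0 := by rw [h1n, h20]
        refine ⟨n₁ + n₂, catF n₁ z₁ z₂, ?_, ?_, catF_rel (R := fun x y => x ⋖ y ∨ y ⋖ x) glue h1cov h2cov, ?_⟩
        · rw [catF_le (Nat.zero_le _)]; exact h10
        · rw [catF_ge glue (by omega)]; simpa using h2n
        · intro q hq hq'
          rcases List.mem_cons.1 hq with rfl | hq2
          · exact h1seg.cat_left
          · exact HasSeg.cat_right glue (h2seg q hq2 hq')
      · refine ⟨n₂, z₂, h20, h2n, h2cov, ?_⟩
        intro q hq hq'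
        rcases List.mem_cons.1 hq with rfl | hq2
        · exact absurd hq' hp
        · exact h2seg q hq2 hq'

end Walks
end PCRaux
namespace PCRaux

lemma supIrred_finsetSup {D : Type*} [SemilatticeSup D] [OrderBot D] {ι : Type*}
    {d : D} (hd : SupIrred d) :
    ∀ (s : Finset ι) (f : ι → D), d = s.sup f → ∃ i ∈ s, d = f i := by
  intro s
  classical
  induction s using Finset.induction_on with
  | empty =>
      intro f h
      exact absurd (h ▸ isMin_bot) hd.1
  | insert x s ha ih =>
      intro f h
      rw [Finset.sup_insert] at h
      rcases hd.2 h.symm with h1 | h1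
      · exact ⟨x, Finset.mem_insert_self _ _, h1.symm⟩
      · obtain ⟨i, hi, he⟩ := ih f h1.symm
        exact ⟨i, Finset.mem_insert_of_mem hi, he⟩

variable {L : Type*} [Lattice L] {D : Type*} [DistribLattice D] [BoundedOrder D]

/-- the labels on the walk -/
def labF (φ : LatCon L ≃o D) (N : ℕ) (z : ℕ → L) : Fin N → D :=
  fun i => φ (latConGen (z i.val ⊓ z (i.val + 1)) (z i.val ⊔ z (i.val + 1)))

lemma erep_eval (φ : LatCon L ≃o D) (N : ℕ) (z : ℕ → L) (a b : Fin (N + 1))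
    (hab : a ≤ b) :
    erep (labF φ N z) a b =
      φ (latConGen (wInf z a.val (b.val - a.val)) (wSup z a.val (b.val - a.val))) := by
  have habv : a.val ≤ b.val := hab
  set k := b.val - a.val with hk
  have hk' : a.val + k = b.val := by omega
  apply le_antisymm
  · apply Finset.sup_le
    intro i _
    by_cases hc : a ≤ i.castSucc ∧ i.succ ≤ b
    · rw [if_pos hc]
      obtain ⟨hc1, hc2⟩ := hc
      rw [Fin.le_def, Fin.coe_castSucc] at hc1
      rw [Fin.le_def, Fin.val_succ] at hc2
      apply φ.le_iff_le.2
      apply latConGen_mono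
      · exact le_inf (wInf_le z a.val k i.val hc1 (by omega))
          (wInf_le z a.val k (i.val + 1) (by omega) (by omega))
      · exact le_trans inf_le_left le_sup_left
      · exact sup_le (le_wSup z a.val k i.val hc1 (by omega))
          (le_wSup z a.val k (i.val + 1) (by omega) (by omega))
    · rw [if_neg hc]; exact bot_le
  · have key : ∀ i, a.val ≤ i → i < a.val + k →
        (φ.symm (erep (labF φ N z) a b)).r (z i) (z (i + 1)) := by
      intro i h1 h2
      have hiN : i < N := by have := b.isLt; omega
      have hterm : labF φ N z ⟨i, hiN⟩ ≤ erep (labF φ N z) a b := by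
        have h := Finset.le_sup (f := fun j : Fin N =>
            if a ≤ j.castSucc ∧ j.succ ≤ b then labF φ N z j else ⊥)
          (Finset.mem_univ (⟨i, hiN⟩ : Fin N))
        rwa [if_pos ⟨by simp only [Fin.le_def, Fin.coe_castSucc, Fin.val_mk]; exact h1,
          by simp only [Fin.le_def, Fin.val_succ, Fin.val_mk]; omega⟩] at h
      have hle := φ.symm.monotone hterm
      rw [show labF φ N z ⟨i, hiN⟩ =
          φ (latConGen (z i ⊓ z (i + 1)) (z i ⊔ z (i + 1))) from rfl,
        φ.symm_apply_apply] at hle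
      exact r_of_inf_sup (latConGen_le_iff.1 hle)
    have hIS := fence (φ.symm (erep (labF φ N z) a b)) z a.val k key
    have hle : latConGen (wInf z a.val k) (wSup z a.val k) ≤
        φ.symm (erep (labF φ N z) a b) := latConGen_le_iff.2 hIS
    have := φ.monotone hle
    rwa [φ.apply_symm_apply] at this

lemma erep_seg_eval (φ : LatCon L ≃o D) (N : ℕ) (z : ℕ → L) {u v : L}
    (a b : Fin (N + 1)) (hab : a ≤ b) (hza : z a.val = u) (hzb : z b.val = v)
    (hmono : ∀ i, a.val ≤ i → i < b.val → z i ≤ z (i + 1)) :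
    erep (labF φ N z) a b = φ (latConGen u v) := by
  have habv : a.val ≤ b.val := hab
  have h := erep_eval φ N z a b hab
  obtain ⟨hI, hS⟩ := wInf_wSup_of_monotone z a.val (b.val - a.val)
    (fun i h1 h2 => hmono i h1 (by omega))
  rw [h, hI, hS, show a.val + (b.val - a.val) = b.val from by omega, hza, hzb]

end PCRaux

/-- If a candidate subset `Q` of a finite distributive lattice `D` is principal
congruence representable, then it is chain-representable. -/
theorem isChainRep_of_isPCR
    (D : Type) [DistribLattice D] [Fintype D] [BoundedOrder D]
    (Q : Set D) (hQ : IsCandidate D Q) (hrep : IsPCR D Q) :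
    IsChainRep D Q := by
  obtain ⟨L, iL, iF, hne, φ, hQφ⟩ := hrep
  haveI : Nonempty L := hne
  -- the bottom element of L
  set m : L := (Finset.univ : Finset L).inf' Finset.univ_nonempty id with hm
  have hmle : ∀ x : L, m ≤ x := fun x => Finset.inf'_le id (Finset.mem_univ x)
  obtain ⟨N, z, hcov, hseg⟩ := PCRaux.exists_walk m hmle
  refine ⟨N, PCRaux.labF φ N z, ⟨?_, ?_⟩, ?_⟩
  · -- all labels are join-irreducible
    intro i
    rcases hcov i.val i.isLt with h | h
    · show SupIrred (φ (latConGen (z i.val ⊓ z (i.val + 1)) (z i.val ⊔ z (i.val + 1))))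
      rw [inf_eq_left.2 h.le, sup_eq_right.2 h.le]
      exact PCRaux.prime_supIrred φ h
    · show SupIrred (φ (latConGen (z i.val ⊓ z (i.val + 1)) (z i.val ⊔ z (i.val + 1))))
      rw [inf_eq_right.2 h.le, sup_eq_left.2 h.le]
      exact PCRaux.prime_supIrred φ h
  · -- every join-irreducible element of D is a label
    intro d hd
    have hdQ : d ∈ Q :=
      hQ (Set.mem_insert_iff.2 (Or.inr (Set.mem_insert_iff.2 (Or.inr hd))))
    rw [hQφ] at hdQ
    obtain ⟨θ, ⟨u, v, huv, rfl⟩, hdd⟩ := hdQ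
    have hne' : u ≠ v := by
      rintro rfl
      rw [PCRaux.latConGen_self, PCRaux.phi_bot φ] at hdd
      exact hd.1 (hdd ▸ isMin_bot)
    obtain ⟨a, b, hab, hbN, hza, hzb, hmono⟩ := hseg u v huv
    have heval := PCRaux.erep_seg_eval φ N z (⟨a, by omega⟩ : Fin (N + 1))
      (⟨b, by omega⟩ : Fin (N + 1)) (by rw [Fin.mk_le_mk]; exact hab) hza hzb hmono
    have hd' : d = erep (PCRaux.labF φ N z) ⟨a, by omega⟩ ⟨b, by omega⟩ := by
      rw [heval, hdd]
    obtain ⟨i, _, hi⟩ := PCRaux.supIrred_finsetSup hd Finset.univ _ hd'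
    by_cases hc : (⟨a, by omega⟩ : Fin (N + 1)) ≤ i.castSucc ∧
        i.succ ≤ (⟨b, by omega⟩ : Fin (N + 1))
    · rw [if_pos hc] at hi
      exact ⟨i, hi.symm⟩
    · rw [if_neg hc] at hi
      exact absurd (hi ▸ isMin_bot) hd.1
  · -- Q equals the represented subset
    ext x
    constructor
    · intro hx
      rw [hQφ] at hx
      obtain ⟨θ, ⟨u, v, huv, rfl⟩, rfl⟩ := hx
      obtain ⟨a, b, hab, hbN, hza, hzb, hmono⟩ := hseg u v huv
      refine ⟨⟨a, by omega⟩, ⟨b, by omega⟩, by rw [Fin.mk_le_mk]; exact hab, ?_⟩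
      exact (PCRaux.erep_seg_eval φ N z (⟨a, by omega⟩ : Fin (N + 1))
        (⟨b, by omega⟩ : Fin (N + 1)) (by rw [Fin.mk_le_mk]; exact hab)
        hza hzb hmono).symm
    · rintro ⟨a, b, hab, rfl⟩
      rw [hQφ, PCRaux.erep_eval φ N z a b hab]
      exact ⟨_, ⟨_, _, PCRaux.wInf_le_wSup z a.val (b.val - a.val), rfl⟩, rfl⟩
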